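/- Let V₁ and V₃ be 2×2 complex unitary matrices satisfying V₃·V₁·|0⟩⟨0|·V₁†·V₃† = |0⟩⟨0| and V₃·σx·V₁·|0⟩⟨0|·V₁†·σx·V₃† = |0⟩⟨0|, and suppose V₁·|0⟩⟨0|·V₁† = |+⟩⟨+|. Then V₃†·|0⟩⟨0|·V₃ = V₁·|0⟩⟨0|·V₁†, and there exist θ, α ∈ ℝ such that V₃ = e^{iθ}·R_z(α)·V₁†. -/

import Mathlib

open Matrix

noncomputable section

def σx : Matrix (Fin 2) (Fin 2) ℂ := !![0, 1; 1, 0]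

/-- The projector |0⟩⟨0|. -/
def P0 : Matrix (Fin 2) (Fin 2) ℂ := !![1, 0; 0, 0]

/-- The projector |+⟩⟨+|. -/
def Pplus : Matrix (Fin 2) (Fin 2) ℂ := !![1/2, 1/2; 1/2, 1/2]

/-- The rotation matrix about the z-axis: `R_z(θ) = diag(e^{−iθ/2}, e^{iθ/2})`. -/
def Rz (θ : ℝ) : Matrix (Fin 2) (Fin 2) ℂ :=
  !![Complex.exp (-(θ / 2) * Complex.I), 0; 0, Complex.exp ((θ / 2) * Complex.I)]

theorem V3_characterization (V₁ V₃ : Matrix (Fin 2) (Fin 2) ℂ)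
    (hV₁ : V₁ ∈ Matrix.unitaryGroup (Fin 2) ℂ)
    (hV₃ : V₃ ∈ Matrix.unitaryGroup (Fin 2) ℂ)
    (h1 : V₃ * V₁ * P0 * V₁ᴴ * V₃ᴴ = P0)
    (h2 : V₃ * σx * V₁ * P0 * V₁ᴴ * σx * V₃ᴴ = P0)
    (hplus : V₁ * P0 * V₁ᴴ = Pplus) :
    V₃ᴴ * P0 * V₃ = V₁ * P0 * V₁ᴴ ∧
    ∃ θ α : ℝ, V₃ = Complex.exp ((θ : ℂ) * Complex.I) • (Rz α * V₁ᴴ) := by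
  have hV₁s : V₁ᴴ * V₁ = 1 := hV₁.1
  have hV₁s' : V₁ * V₁ᴴ = 1 := (Matrix.mem_unitaryGroup_iff.mp hV₁)
  have hV₃s : V₃ᴴ * V₃ = 1 := hV₃.1
  have hV₃s' : V₃ * V₃ᴴ = 1 := (Matrix.mem_unitaryGroup_iff.mp hV₃)
  set U : Matrix (Fin 2) (Fin 2) ℂ := V₃ * V₁ with hUdef
  have hUs : Uᴴ * U = 1 := by
    rw [hUdef, Matrix.conjTranspose_mul]
    calc V₁ᴴ * V₃ᴴ * (V₃ * V₁) = V₁ᴴ * (V₃ᴴ * V₃) * V₁ := by noncomm_ring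
      _ = 1 := by rw [hV₃s]; simp [hV₁s]
  have hUs' : U * Uᴴ = 1 := by
    rw [hUdef, Matrix.conjTranspose_mul]
    calc V₃ * V₁ * (V₁ᴴ * V₃ᴴ) = V₃ * (V₁ * V₁ᴴ) * V₃ᴴ := by noncomm_ring
      _ = 1 := by rw [hV₁s']; simp [hV₃s']
  have hUP : U * P0 * Uᴴ = P0 := by
    rw [hUdef, Matrix.conjTranspose_mul]
    calc V₃ * V₁ * P0 * (V₁ᴴ * V₃ᴴ) = V₃ * V₁ * P0 * V₁ᴴ * V₃ᴴ := by noncomm_ring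
      _ = P0 := h1
  have hcomm : U * P0 = P0 * U := by
    calc U * P0 = U * P0 * (Uᴴ * U) := by rw [hUs]; simp
      _ = (U * P0 * Uᴴ) * U := by noncomm_ring
      _ = P0 * U := by rw [hUP]
  have h01 : U 0 1 = 0 := by
    have := congrFun (congrFun hcomm 0) 1
    simpa [Matrix.mul_apply, Fin.sum_univ_two, P0] using this.symm
  have h10 : U 1 0 = 0 := by
    have := congrFun (congrFun hcomm 1) 0
    simpa [Matrix.mul_apply, Fin.sum_univ_two, P0] using this
  have h00 : (starRingEnd ℂ) (U 0 0) * U 0 0 = 1 := by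
    have := congrFun (congrFun hUs 0) 0
    simpa [Matrix.mul_apply, Fin.sum_univ_two, Matrix.conjTranspose_apply, h10] using this
  have h11 : (starRingEnd ℂ) (U 1 1) * U 1 1 = 1 := by
    have := congrFun (congrFun hUs 1) 1
    simpa [Matrix.mul_apply, Fin.sum_univ_two, Matrix.conjTranspose_apply, h01] using this
  have habs00 : ‖U 0 0‖ = 1 := by
    have : (Complex.normSq (U 0 0) : ℂ) = 1 := by rw [Complex.normSq_eq_conj_mul_self]; exact h00
    have h2' : Complex.normSq (U 0 0) = 1 := by exact_mod_cast this
    have := Complex.sq_norm (U 0 0)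
    nlinarith [norm_nonneg (U 0 0)]
  have habs11 : ‖U 1 1‖ = 1 := by
    have : (Complex.normSq (U 1 1) : ℂ) = 1 := by rw [Complex.normSq_eq_conj_mul_self]; exact h11
    have h2' : Complex.normSq (U 1 1) = 1 := by exact_mod_cast this
    have := Complex.sq_norm (U 1 1)
    nlinarith [norm_nonneg (U 1 1)]
  set φ := Complex.arg (U 0 0) with hφ
  set ψ := Complex.arg (U 1 1) with hψ
  have hU00 : U 0 0 = Complex.exp (φ * Complex.I) := by
    have := Complex.norm_mul_exp_arg_mul_I (U 0 0)
    rw [habs00] at this; simpa using this.symm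
  have hU11 : U 1 1 = Complex.exp (ψ * Complex.I) := by
    have := Complex.norm_mul_exp_arg_mul_I (U 1 1)
    rw [habs11] at this; simpa using this.symm
  constructor
  · calc V₃ᴴ * P0 * V₃ = V₃ᴴ * (V₃ * V₁ * P0 * V₁ᴴ * V₃ᴴ) * V₃ := by rw [h1]
      _ = (V₃ᴴ * V₃) * (V₁ * P0 * V₁ᴴ) * (V₃ᴴ * V₃) := by noncomm_ring
      _ = V₁ * P0 * V₁ᴴ := by rw [hV₃s]; simp
  · refine ⟨(φ + ψ) / 2, ψ - φ, ?_⟩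
    have hUeq : U = Complex.exp ((((φ + ψ) / 2 : ℝ) : ℂ) * Complex.I) • Rz (ψ - φ) := by
      ext i j
      fin_cases i <;> fin_cases j <;>
        simp [Rz, Matrix.smul_apply, h01, h10, hU00, hU11, ← Complex.exp_add]
      · congr 1; push_cast; ring
      · congr 1; push_cast; ring
    calc V₃ = V₃ * (V₁ * V₁ᴴ) := by rw [hV₁s']; simp
      _ = U * V₁ᴴ := by rw [hUdef, mul_assoc]
      _ = (Complex.exp ((((φ + ψ) / 2 : ℝ) : ℂ) * Complex.I) • Rz (ψ - φ)) * V₁ᴴ := by rw [hUeq]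
      _ = _ := by rw [Matrix.smul_mul]
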